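/- arXiv:2308.06336 — 4 statements merged into one kernel-verified Lean document; each statement's English description precedes it below -/
import Mathlib

section
/- Let f: Γ → Σ be a bundle scenario, p an empirical model on f, and π: Σ' → ĤNΣ a simplicial complex map; let l: π*(ĤNΓ) → ĤNΓ and f^π: π*(ĤNΓ) → Σ' be the pullback projections of ĤNf along π. Then the family (π_*p)_{σ'}(γ') := (ĤNp)_{π(σ')}(l(γ')) for σ' ∈ Σ' and γ' ∈ (f^π)⁻¹(σ') is an empirical model on the bundle scenario f^π. Moreover, for any further simplicial complex map π': Σ'' → ĤNΣ', under the canonical identification of (π ⋄ π')*(ĤNΓ) with (π')*(ĤN(π*(ĤNΓ))), one has (π ⋄ π')_* p = π'_*(π_* p), where π ⋄ π' := μ_Σ ∘ ĤNπ ∘ π'. -/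
universe u v w t

namespace Ctx

/-- An abstract simplicial complex on the vertex type `V`: a collection of
nonempty finite subsets of `V` (the simplices/faces), closed under passing to
nonempty subsets, and containing every singleton (so that `V` is exactly the
vertex set). -/
structure SComplex (V : Type u) where
  faces : Set (Set V)
  finite_mem : ∀ σ ∈ faces, Set.Finite σ
  nonempty_mem : ∀ σ ∈ faces, Set.Nonempty σ
  down_closed : ∀ ⦃σ⦄, σ ∈ faces → ∀ ⦃τ⦄, τ ⊆ σ → τ.Nonempty → τ ∈ faces
  singleton_mem : ∀ x : V, {x} ∈ faces

namespace SComplex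

variable {V : Type u} {W : Type v} {V' : Type w} {V'' : Type t}

/-- A map of simplicial complexes: a function on vertices carrying every
simplex (elementwise image) to a simplex. -/
@[ext]
structure Map (Γ : SComplex V) (K : SComplex W) where
  toFun : V → W
  map_faces : ∀ ⦃σ⦄, σ ∈ Γ.faces → toFun '' σ ∈ K.faces

variable {Γ : SComplex V} {K : SComplex W} {K' : SComplex V'}

/-- The identity simplicial complex map. -/
protected def Map.id (K : SComplex V) : Map K K :=
  ⟨fun x => x, fun σ h => by simpa using h⟩

/-- Composition of simplicial complex maps. -/
def Map.comp {L : SComplex V'} (g : Map K L) (f : Map Γ K) : Map Γ L :=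
  ⟨g.toFun ∘ f.toFun, fun σ h => by
    rw [Set.image_comp]; exact g.map_faces (f.map_faces h)⟩

/-- The star of a simplex: all simplices containing it. -/
def star (K : SComplex V) (σ : Set V) : Set (Set V) := {τ | τ ∈ K.faces ∧ σ ⊆ τ}

/-- Surjectivity: every simplex of the target is an image of a simplex. -/
def Map.Surj (f : Map Γ K) : Prop := ∀ σ ∈ K.faces, ∃ γ ∈ Γ.faces, f.toFun '' γ = σ

/-- Local surjectivity: stars surject onto stars. -/
def Map.LocSurj (f : Map Γ K) : Prop :=
  ∀ γ ∈ Γ.faces, ∀ τ ∈ K.star (f.toFun '' γ), ∃ γ' ∈ Γ.star γ, f.toFun '' γ' = τ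

/-- Discreteness over vertices: no edge between distinct vertices with the
same image. -/
def Map.DiscV (f : Map Γ K) : Prop :=
  ∀ x y : V, x ≠ y → f.toFun x = f.toFun y → ({x, y} : Set V) ∉ Γ.faces

/-- A bundle scenario: a surjective, locally surjective simplicial complex map
that is discrete over vertices. -/
def Map.IsBundle (f : Map Γ K) : Prop := f.Surj ∧ f.LocSurj ∧ f.DiscV

/-- `f` has the right lifting property with respect to `g`. -/
def RLP {A : Type*} {B : Type*} {CA : SComplex A} {CB : SComplex B}
    (g : Map CA CB) (f : Map Γ K) : Prop :=
  ∀ (u : Map CA Γ) (v : Map CB K), f.comp u = v.comp g →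
    ∃ h : Map CB Γ, h.comp g = u ∧ f.comp h = v

/-- The full simplicial complex `Δ^n` on `{0, …, n}`. -/
def deltaC (n : ℕ) : SComplex (Fin (n + 1)) where
  faces := {σ | σ.Nonempty}
  finite_mem := fun σ _ => σ.toFinite
  nonempty_mem := fun _ h => h
  down_closed := fun _ _ _ _ h => h
  singleton_mem := fun x => Set.singleton_nonempty x

/-- The simplicial complex map `Δ^m → Δ^n` induced by a function
`{0,…,m} → {0,…,n}`. -/
def deltaMap {m n : ℕ} (θ : Fin (m + 1) → Fin (n + 1)) : Map (deltaC m) (deltaC n) :=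
  ⟨θ, fun _ h => h.image θ⟩

/-- The empty simplicial complex. -/
def emptyC : SComplex Empty where
  faces := ∅
  finite_mem := fun _ h => h.elim
  nonempty_mem := fun _ h => h.elim
  down_closed := fun _ h => h.elim
  singleton_mem := fun x => x.elim

/-- The inclusion of the empty simplicial complex into `Δ^n`. -/
def emptyToDelta (n : ℕ) : Map emptyC (deltaC n) :=
  ⟨fun x => x.elim, fun _ h => h.elim⟩

/-- The type of faces of a simplicial complex. -/
abbrev Face (K : SComplex V) : Type u := {σ : Set V // σ ∈ K.faces}

/-- The nerve complex `ĤN K`: vertices are the simplices of `K`, and a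
nonempty finite set of simplices is a face iff its union is a face of `K`. -/
def nerveC (K : SComplex V) : SComplex K.Face where
  faces := {τ | τ.Finite ∧ τ.Nonempty ∧ (⋃ σ ∈ τ, (σ : Set V)) ∈ K.faces}
  finite_mem := fun _ h => h.1
  nonempty_mem := fun _ h => h.2.1
  down_closed := by
    intro τ h τ' hsub hne
    refine ⟨h.1.subset hsub, hne, K.down_closed h.2.2 ?_ ?_⟩
    · exact Set.biUnion_subset_biUnion_left hsub
    · obtain ⟨σ, hσ⟩ := hne
      obtain ⟨x, hx⟩ := K.nonempty_mem σ.1 σ.2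
      exact ⟨x, Set.mem_biUnion hσ hx⟩
  singleton_mem := fun σ => ⟨Set.finite_singleton σ, Set.singleton_nonempty σ, by
    simpa using σ.2⟩

/-- The map `ĤN f` induced on nerve complexes. -/
def nerveMap (f : Map Γ K) : Map (nerveC Γ) (nerveC K) where
  toFun γ := ⟨f.toFun '' γ.1, f.map_faces γ.2⟩
  map_faces := by
    intro τ hτ
    refine ⟨hτ.1.image _, hτ.2.1.image _, ?_⟩
    have h : (⋃ σ ∈ (fun γ : Γ.Face => (⟨f.toFun '' γ.1, f.map_faces γ.2⟩ : K.Face)) '' τ,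
        (σ : Set W)) = f.toFun '' (⋃ σ ∈ τ, (σ : Set V)) := by
      rw [Set.biUnion_image, Set.image_iUnion₂]
    exact Set.mem_of_eq_of_mem h (f.map_faces hτ.2.2)

/-- The unit `δ : K → ĤN K`, sending a vertex to the singleton simplex. -/
def deltaHat (K : SComplex V) : Map K (nerveC K) where
  toFun x := ⟨{x}, K.singleton_mem x⟩
  map_faces := by
    intro σ hσ
    refine ⟨(K.finite_mem σ hσ).image _, (K.nonempty_mem σ hσ).image _, ?_⟩
    have h : (⋃ τ ∈ (fun x : V => (⟨{x}, K.singleton_mem x⟩ : K.Face)) '' σ,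
        (τ : Set V)) = σ := by
      rw [Set.biUnion_image]
      exact Set.biUnion_of_singleton σ
    exact Set.mem_of_eq_of_mem h hσ

/-- The multiplication `μ : ĤN (ĤN K) → ĤN K` of the nerve complex monad,
sending a set of simplices to its union. -/
def muMap (K : SComplex V) : Map (nerveC (nerveC K)) (nerveC K) where
  toFun τ := ⟨⋃ σ ∈ τ.1, (σ : Set V), τ.2.2.2⟩
  map_faces := by
    intro T hT
    refine ⟨hT.1.image _, hT.2.1.image _, ?_⟩
    have h : (⋃ σ ∈ (fun τ : (nerveC K).Face =>
          (⟨⋃ σ ∈ τ.1, (σ : Set V), τ.2.2.2⟩ : K.Face)) '' T, (σ : Set V))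
        = ⋃ σ ∈ (⋃ τ ∈ T, (τ : Set K.Face)), (σ : Set V) := by
      rw [Set.biUnion_image]
      ext x
      simp only [Set.mem_iUnion, Set.mem_setOf_eq]
      tauto
    exact Set.mem_of_eq_of_mem h hT.2.2.2.2

/-- The vertex type of the pull-back of `f : Γ → K` along `π : K' → K`. -/
def PB {Γ : SComplex V} {K : SComplex W} {K' : SComplex V'} (f : Map Γ K) (π : Map K' K) :
    Type (max u w) :=
  {q : V × V' // f.toFun q.1 = π.toFun q.2}

/-- The pull-back of `f : Γ → K` along `π : K' → K`: vertices are pairs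
`(x, y)` with `f x = π y`, and a set of pairs is a simplex iff both coordinate
projections are simplices. -/
def pullback {Γ : SComplex V} {K : SComplex W} {K' : SComplex V'} (f : Map Γ K) (π : Map K' K) :
    SComplex (PB f π) where
  faces := {τ | ((fun q : PB f π => q.1.1) '' τ) ∈ Γ.faces ∧
    ((fun q : PB f π => q.1.2) '' τ) ∈ K'.faces}
  finite_mem := by
    intro τ h
    have h1 : (Subtype.val '' τ).Finite := by
      refine Set.Finite.subset (Set.Finite.prod (Γ.finite_mem _ h.1) (K'.finite_mem _ h.2)) ?_
      rintro q ⟨r, hr, rfl⟩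
      exact ⟨⟨r, hr, rfl⟩, ⟨r, hr, rfl⟩⟩
    exact Set.Finite.of_finite_image h1 Subtype.val_injective.injOn
  nonempty_mem := fun τ h => Set.Nonempty.of_image (Γ.nonempty_mem _ h.1)
  down_closed := fun τ h τ' hsub hne =>
    ⟨Γ.down_closed h.1 (Set.image_mono hsub) (hne.image _),
     K'.down_closed h.2 (Set.image_mono hsub) (hne.image _)⟩
  singleton_mem := fun q => by
    constructor
    · simpa using Γ.singleton_mem q.1.1
    · simpa using K'.singleton_mem q.1.2

/-- First projection of the pull-back. -/
def pbFst {Γ : SComplex V} {K : SComplex W} {K' : SComplex V'} (f : Map Γ K) (π : Map K' K) :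
    Map (pullback f π) Γ :=
  ⟨fun q => q.1.1, fun _ h => h.1⟩

/-- Second projection of the pull-back (the pulled-back bundle). -/
def pbSnd {Γ : SComplex V} {K : SComplex W} {K' : SComplex V'} (f : Map Γ K) (π : Map K' K) :
    Map (pullback f π) K' :=
  ⟨fun q => q.1.2, fun _ h => h.2⟩

/-- The event complex `E_O K` of a scenario `(K, O)`: vertices are pairs
`(x, o)` with `o ∈ O x`, and simplices are graphs of outcome assignments over
simplices of `K`. -/
def eventComplex (K : SComplex V) (O : V → Type v) : SComplex ((x : V) × O x) where
  faces := {τ | (Sigma.fst '' τ) ∈ K.faces ∧ Set.InjOn Sigma.fst τ}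
  finite_mem := fun _ h => Set.Finite.of_finite_image (K.finite_mem _ h.1) h.2
  nonempty_mem := fun _ h => Set.Nonempty.of_image (K.nonempty_mem _ h.1)
  down_closed := fun τ h τ' hsub hne =>
    ⟨K.down_closed h.1 (Set.image_mono hsub) (hne.image _), h.2.mono hsub⟩
  singleton_mem := fun p => ⟨by simpa using K.singleton_mem p.1, Set.injOn_singleton _ _⟩

/-- The canonical projection `E_O K → K` of a scenario. -/
def eventProj (K : SComplex V) (O : V → Type v) : Map (eventComplex K O) K :=
  ⟨Sigma.fst, fun _ h => h.1⟩

end SComplex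

open SComplex

/-- `R`-distributions on a set `U`: finitely supported `R`-valued functions
summing to `1`. -/
def Dist (R : Type u) [CommSemiring R] (U : Type v) : Type (max u v) :=
  {p : U →₀ R // p.sum (fun _ r => r) = 1}

/-- Push-forward of distributions along a function. -/
noncomputable def Dist.map {R : Type u} [CommSemiring R] {U : Type v} {U' : Type w} (g : U → U')
    (p : Dist R U) : Dist R U' :=
  ⟨Finsupp.mapDomain g p.1, by
    rw [Finsupp.sum_mapDomain_index (fun _ => rfl) (fun _ _ _ => rfl)]
    exact p.2⟩

/-- The Dirac distribution at a point. -/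
noncomputable def Dist.pure {R : Type u} [CommSemiring R] {U : Type v} (u : U) : Dist R U :=
  ⟨Finsupp.single u 1, by rw [Finsupp.sum_single_index rfl]⟩

namespace SComplex

/-- The fiber of a simplicial complex map over a simplex of the target. -/
abbrev Map.fiber {Γ : SComplex V} {K : SComplex W} (f : Map Γ K) (σ : Set W) : Type u :=
  {γ : Set V // γ ∈ Γ.faces ∧ f.toFun '' γ = σ}

/-- The restriction map between fibers, sending `γ` over `σ` to the
subsimplex of `γ` lying over `σ' ⊆ σ`.  (For bundle scenarios this is the
unique such subsimplex.) -/
def Map.resFiber {Γ : SComplex V} {K : SComplex W} (f : Map Γ K) {σ σ' : Set W}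
    (hσ' : σ' ∈ K.faces) (h : σ' ⊆ σ) (γ : f.fiber σ) : f.fiber σ' := by
  have hne : ({y | y ∈ γ.1 ∧ f.toFun y ∈ σ'} : Set V).Nonempty := by
    obtain ⟨x, hx⟩ := K.nonempty_mem σ' hσ'
    have hx' : x ∈ f.toFun '' γ.1 := (Set.ext_iff.mp γ.2.2 x).mpr (h hx)
    obtain ⟨y, hy, rfl⟩ := hx'
    exact ⟨y, hy, hx⟩
  refine ⟨{y | y ∈ γ.1 ∧ f.toFun y ∈ σ'},
    Γ.down_closed γ.2.1 (fun y hy => hy.1) hne, ?_⟩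
  ext x
  constructor
  · rintro ⟨y, ⟨hy, hfy⟩, rfl⟩
    exact hfy
  · intro hx
    have hx' : x ∈ f.toFun '' γ.1 := (Set.ext_iff.mp γ.2.2 x).mpr (h hx)
    obtain ⟨y, hy, rfl⟩ := hx'
    exact ⟨y, ⟨hy, hx⟩, rfl⟩

/-- An empirical model on a bundle scenario `f : Γ → K`: a compatible family
of distributions on the fibers of `f`. -/
structure EmpiricalModel (R : Type t) [CommSemiring R] {Γ : SComplex V} {K : SComplex W}
    (f : Map Γ K) where
  dist : ∀ σ, σ ∈ K.faces → Dist R (f.fiber σ)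
  compat : ∀ σ (hσ : σ ∈ K.faces) σ' (hσ' : σ' ∈ K.faces) (h : σ' ⊆ σ),
    Dist.map (f.resFiber hσ' h) (dist σ hσ) = dist σ' hσ'

/-- An empirical model on a scenario `(K, O)`: a compatible family of
distributions on joint outcome assignments over each measurement context. -/
structure ScenEmp (R : Type t) [CommSemiring R] (K : SComplex V) (O : V → Type v) where
  dist : ∀ σ, σ ∈ K.faces → Dist R (∀ x : σ, O x.1)
  compat : ∀ σ (hσ : σ ∈ K.faces) σ' (hσ' : σ' ∈ K.faces) (h : σ' ⊆ σ),
    Dist.map (fun (s : ∀ x : σ, O x.1) (x : σ') => s ⟨x.1, h x.2⟩) (dist σ hσ) = dist σ' hσ'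

end SComplex

namespace SComplex

variable {V : Type u} {W : Type v} {V' : Type w}


/-- The defining property of the push-forward `π_* p` of an empirical model
`p` on `f` along a simplicial relation `π : K' → ĤN K` (a simplicial complex
map into the nerve complex): over a simplex `σ'` of `K'`, the value at a fiber
element `γ'` of the pulled-back bundle is the value of `p` over the union
`π̄(σ')` at the union of the first components of `γ'`. -/
def piPushSpec {Γ : SComplex V} {K : SComplex W} {K' : SComplex V'}
    (f : Map Γ K) (π : Map K' (nerveC K)) {R : Type t} [CommSemiring R]
    (p : EmpiricalModel R f) (q : EmpiricalModel R (pbSnd (nerveMap f) π)) : Prop :=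
  ∀ σ' (hσ' : σ' ∈ K'.faces) (γ' : (pbSnd (nerveMap f) π).fiber σ')
    (hu : (⋃ x' ∈ σ', ((π.toFun x' : K.Face) : Set W)) ∈ K.faces)
    (γ : f.fiber (⋃ x' ∈ σ', ((π.toFun x' : K.Face) : Set W))),
    (γ : Set V) = (⋃ r ∈ γ'.1, ((r.1.1 : Γ.Face) : Set V)) →
    (q.dist σ' hσ').1 γ' = (p.dist _ hu).1 γ

/-- The fiber element of the event bundle given by the graph of an outcome
assignment `s` over a simplex `σ`. -/
def graphFiber (K : SComplex V) (O : V → Type v) {σ : Set V} (hσ : σ ∈ K.faces)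
    (s : ∀ x : σ, O x.1) : (eventProj K O).fiber σ := by
  refine ⟨{p : (x : V) × O x | ∃ h : p.1 ∈ σ, p.2 = s ⟨p.1, h⟩}, ⟨?_, ?_⟩, ?_⟩
  · have h : Sigma.fst '' {p : (x : V) × O x | ∃ h : p.1 ∈ σ, p.2 = s ⟨p.1, h⟩} = σ := by
      ext x
      constructor
      · rintro ⟨p, ⟨hp, _⟩, rfl⟩; exact hp
      · intro hx; exact ⟨⟨x, s ⟨x, hx⟩⟩, ⟨hx, rfl⟩, rfl⟩
    exact Set.mem_of_eq_of_mem h hσ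
  · rintro ⟨x₁, o₁⟩ ⟨h₁, ho₁⟩ ⟨x₂, o₂⟩ ⟨h₂, ho₂⟩ hx
    obtain rfl : x₁ = x₂ := hx
    exact congrArg (Sigma.mk x₁) (ho₁.trans ho₂.symm)
  · ext x
    constructor
    · rintro ⟨p, ⟨hp, _⟩, rfl⟩; exact hp
    · intro hx; exact ⟨⟨x, s ⟨x, hx⟩⟩, ⟨hx, rfl⟩, rfl⟩

/-- Push-forward of a fiber element along a map over the base. -/
def pushFiber {Γ : SComplex V} {Γ' : SComplex V'} {K : SComplex W}
    (f : Map Γ K) (g : Map Γ' K) (α : Map Γ Γ') (hc : g.comp α = f) (σ : Set W)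
    (γ : f.fiber σ) : g.fiber σ := by
  refine ⟨α.toFun '' γ.1, α.map_faces γ.2.1, ?_⟩
  rw [← Set.image_comp]
  have h : g.toFun ∘ α.toFun = f.toFun := congrArg Map.toFun hc
  rw [h]
  exact γ.2.2

/-- Sections of a bundle scenario. -/
def BSection {Γ : SComplex V} {K : SComplex W} (f : Map Γ K) : Type _ :=
  {s : Map K Γ // f.comp s = Map.id K}

/-- Evaluation of a section of a bundle scenario at a simplex of the base,
giving an element of the fiber. -/
def BSection.ev {Γ : SComplex V} {K : SComplex W} (f : Map Γ K) (σ : Set W)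
    (hσ : σ ∈ K.faces) (s : BSection f) : f.fiber σ := by
  refine ⟨s.1.toFun '' σ, s.1.map_faces hσ, ?_⟩
  rw [← Set.image_comp]
  have h : f.toFun ∘ s.1.toFun = fun x => x := congrArg Map.toFun s.2
  rw [h, Set.image_id']

/-- Noncontextuality of an empirical model on a bundle scenario: it is a
mixture of deterministic models coming from sections. -/
def BundleNC (R : Type t) [CommSemiring R] {Γ : SComplex V} {K : SComplex W}
    (f : Map Γ K) (p : EmpiricalModel R f) : Prop :=
  ∃ d : Dist R (BSection f), ∀ σ (hσ : σ ∈ K.faces),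
    p.dist σ hσ = Dist.map (BSection.ev f σ hσ) d

/-- Noncontextuality of an empirical model on a scenario `(K, O)`: it is a
mixture of deterministic models coming from global outcome assignments. -/
def ScenNC (R : Type t) [CommSemiring R] (K : SComplex V) (O : V → Type v)
    (e : ScenEmp R K O) : Prop :=
  ∃ d : Dist R (∀ x : V, O x), ∀ σ (hσ : σ ∈ K.faces),
    e.dist σ hσ = Dist.map (fun (g : ∀ x : V, O x) (x : σ) => g x.1) d

end SComplex

end Ctx

namespace Ctx
open SComplex

section Aux

variable {V : Type u} {W : Type v} {V' : Type w}
variable {Γ : SComplex V} {K : SComplex W} {K' : SComplex V'}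

lemma Dist.map_map {R : Type*} [CommSemiring R] {U₁ U₂ U₃ : Type*}
    (g : U₂ → U₃) (h : U₁ → U₂) (p : Dist R U₁) :
    Dist.map g (Dist.map h p) = Dist.map (g ∘ h) p :=
  Subtype.ext (Finsupp.mapDomain_comp).symm

lemma Dist.map_apply_inj {R : Type*} [CommSemiring R] {U₁ U₂ : Type*}
    {g : U₁ → U₂} (hg : Function.Injective g) (p : Dist R U₁) (u : U₁) :
    (Dist.map g p).1 (g u) = p.1 u :=
  Finsupp.mapDomain_apply hg _ _

lemma injOn_of_discV (f : Map Γ K) (hd : f.DiscV) {γ : Set V} (hγ : γ ∈ Γ.faces) :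
    Set.InjOn f.toFun γ := by
  intro x hx y hy hxy
  by_contra hne
  refine hd x y hne hxy (Γ.down_closed hγ ?_ ⟨x, by simp⟩)
  intro z hz
  rcases hz with rfl | hz
  · exact hx
  · rcases hz with rfl; exact hy

/-- Uniqueness of subsimplices over a subsimplex of the base, for bundle maps. -/
lemma sub_eq_res (f : Map Γ K) (hd : f.DiscV) {γ δ : Set V} (hγ : γ ∈ Γ.faces)
    (hδγ : δ ⊆ γ) {σ' : Set W} (hδ : f.toFun '' δ = σ') :
    δ = {y | y ∈ γ ∧ f.toFun y ∈ σ'} := by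
  ext y
  constructor
  · intro hy; exact ⟨hδγ hy, hδ ▸ ⟨y, hy, rfl⟩⟩
  · rintro ⟨hyγ, hyσ⟩
    rw [← hδ] at hyσ
    obtain ⟨z, hz, hzy⟩ := hyσ
    have := injOn_of_discV f hd hγ (hδγ hz) hyγ hzy
    exact this ▸ hz

lemma resFiber_val (f : Map Γ K) {σ σ' : Set W} (hσ' : σ' ∈ K.faces) (h : σ' ⊆ σ)
    (γ : f.fiber σ) :
    (f.resFiber hσ' h γ).1 = {y | y ∈ γ.1 ∧ f.toFun y ∈ σ'} := rfl

lemma union_pi_mem (π : Map K' (nerveC K)) {σ' : Set V'} (hσ' : σ' ∈ K'.faces) :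
    (⋃ x' ∈ σ', ((π.toFun x' : K.Face) : Set W)) ∈ K.faces := by
  have h := (π.map_faces hσ').2.2
  rwa [Set.biUnion_image] at h

/-- The underlying set of the canonical fiber element of the pulled-back
bundle determined by a fiber element of `f` over the union. -/
def phiSet (f : Map Γ K) (π : Map K' (nerveC K)) (σ' : Set V') (γ : Set V) :
    Set (PB (nerveMap f) π) :=
  {z | z.1.2 ∈ σ' ∧ (z.1.1 : Set V) = {y | y ∈ γ ∧ f.toFun y ∈ (π.toFun z.1.2 : Set W)}}

lemma phiSet_injOn_snd (f : Map Γ K) (π : Map K' (nerveC K)) (σ' : Set V') (γ : Set V) :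
    Set.InjOn (fun z : PB (nerveMap f) π => z.1.2) (phiSet f π σ' γ) := by
  rintro z hz w hw h
  have h2 : z.1.2 = w.1.2 := h
  apply Subtype.ext
  apply Prod.ext
  · apply Subtype.ext
    rw [hz.2, hw.2, h2]
  · exact h2

lemma subset_unionPi (π : Map K' (nerveC K)) {σ' : Set V'} {x' : V'} (hx' : x' ∈ σ') :
    ((π.toFun x' : K.Face) : Set W) ⊆ ⋃ y ∈ σ', ((π.toFun y : K.Face) : Set W) :=
  Set.subset_biUnion_of_mem (u := fun y => ((π.toFun y : K.Face) : Set W)) hx'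

/-- The canonical element of `phiSet` over a vertex `x' ∈ σ'`. -/
def phiElt (f : Map Γ K) (π : Map K' (nerveC K)) {σ' : Set V'}
    (γ : f.fiber (⋃ x' ∈ σ', ((π.toFun x' : K.Face) : Set W))) {x' : V'} (hx' : x' ∈ σ') :
    PB (nerveMap f) π :=
  ⟨(⟨(f.resFiber (π.toFun x').2 (subset_unionPi π hx') γ).1,
      (f.resFiber (π.toFun x').2 (subset_unionPi π hx') γ).2.1⟩, x'),
    Subtype.ext (f.resFiber (π.toFun x').2 (subset_unionPi π hx') γ).2.2⟩

lemma phiElt_mem (f : Map Γ K) (π : Map K' (nerveC K)) {σ' : Set V'}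
    (γ : f.fiber (⋃ x' ∈ σ', ((π.toFun x' : K.Face) : Set W))) {x' : V'} (hx' : x' ∈ σ') :
    phiElt f π γ hx' ∈ phiSet f π σ' γ.1 :=
  ⟨hx', rfl⟩

lemma phiSet_biUnion (f : Map Γ K) (π : Map K' (nerveC K)) {σ' : Set V'}
    (γ : f.fiber (⋃ x' ∈ σ', ((π.toFun x' : K.Face) : Set W))) :
    (⋃ z ∈ phiSet f π σ' γ.1, ((z.1.1 : Γ.Face) : Set V)) = γ.1 := by
  apply Set.Subset.antisymm
  · refine Set.iUnion₂_subset ?_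
    rintro z hz y hy
    rw [hz.2] at hy
    exact hy.1
  · intro y hy
    have hfy : f.toFun y ∈ (⋃ x' ∈ σ', ((π.toFun x' : K.Face) : Set W)) := by
      rw [← γ.2.2]; exact ⟨y, hy, rfl⟩
    obtain ⟨x', hx', hfy'⟩ := Set.mem_iUnion₂.mp hfy
    refine Set.mem_iUnion₂.mpr ⟨phiElt f π γ hx', phiElt_mem f π γ hx', ?_⟩
    exact ⟨hy, hfy'⟩

lemma phiSet_snd_image (f : Map Γ K) (π : Map K' (nerveC K)) {σ' : Set V'}
    (γ : f.fiber (⋃ x' ∈ σ', ((π.toFun x' : K.Face) : Set W))) :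
    (fun z : PB (nerveMap f) π => z.1.2) '' phiSet f π σ' γ.1 = σ' := by
  apply Set.Subset.antisymm
  · rintro x' ⟨z, hz, rfl⟩; exact hz.1
  · intro x' hx'
    exact ⟨phiElt f π γ hx', phiElt_mem f π γ hx', rfl⟩

lemma phiSet_finite (f : Map Γ K) (π : Map K' (nerveC K)) {σ' : Set V'}
    (hσ' : σ' ∈ K'.faces)
    (γ : f.fiber (⋃ x' ∈ σ', ((π.toFun x' : K.Face) : Set W))) :
    (phiSet f π σ' γ.1).Finite := by
  apply Set.Finite.of_finite_image _ (phiSet_injOn_snd f π σ' γ.1)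
  rw [phiSet_snd_image f π γ]
  exact K'.finite_mem σ' hσ'

lemma phiSet_nonempty (f : Map Γ K) (π : Map K' (nerveC K)) {σ' : Set V'}
    (hσ' : σ' ∈ K'.faces)
    (γ : f.fiber (⋃ x' ∈ σ', ((π.toFun x' : K.Face) : Set W))) :
    (phiSet f π σ' γ.1).Nonempty := by
  obtain ⟨x', hx'⟩ := K'.nonempty_mem σ' hσ'
  exact ⟨phiElt f π γ hx', phiElt_mem f π γ hx'⟩

/-- The canonical fiber element of the pulled-back bundle over `σ'`
determined by a fiber element of `f` over the union `U(σ')`. -/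
def phiFib (f : Map Γ K) (π : Map K' (nerveC K)) {σ' : Set V'} (hσ' : σ' ∈ K'.faces)
    (γ : f.fiber (⋃ x' ∈ σ', ((π.toFun x' : K.Face) : Set W))) :
    (pbSnd (nerveMap f) π).fiber σ' := by
  refine ⟨phiSet f π σ' γ.1, ⟨?_, ?_⟩, phiSet_snd_image f π γ⟩
  · refine ⟨(phiSet_finite f π hσ' γ).image _, (phiSet_nonempty f π hσ' γ).image _, ?_⟩
    have h : (⋃ δ ∈ (fun z : PB (nerveMap f) π => z.1.1) '' phiSet f π σ' γ.1,
        ((δ : Γ.Face) : Set V)) = ⋃ z ∈ phiSet f π σ' γ.1, ((z.1.1 : Γ.Face) : Set V) :=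
      Set.biUnion_image
    rw [h, phiSet_biUnion f π γ]
    exact γ.2.1
  · rw [show (fun z : PB (nerveMap f) π => z.1.2) '' phiSet f π σ' γ.1 = σ' from
      phiSet_snd_image f π γ]
    exact hσ'

lemma phiFib_val (f : Map Γ K) (π : Map K' (nerveC K)) {σ' : Set V'} (hσ' : σ' ∈ K'.faces)
    (γ : f.fiber (⋃ x' ∈ σ', ((π.toFun x' : K.Face) : Set W))) :
    (phiFib f π hσ' γ).1 = phiSet f π σ' γ.1 := rfl

/-- Recovery: any fiber element of the pulled-back bundle whose union of first
components is `γ` equals `phiFib γ`. -/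
lemma phi_recover (f : Map Γ K) (π : Map K' (nerveC K)) (hd : f.DiscV) {σ' : Set V'}
    (hσ' : σ' ∈ K'.faces) (τ : (pbSnd (nerveMap f) π).fiber σ')
    (γ : f.fiber (⋃ x' ∈ σ', ((π.toFun x' : K.Face) : Set W)))
    (h : (γ : Set V) = ⋃ z ∈ τ.1, ((z.1.1 : Γ.Face) : Set V)) :
    phiFib f π hσ' γ = τ := by
  have key : ∀ z ∈ τ.1, (z.1.1 : Set V) =
      {y | y ∈ γ.1 ∧ f.toFun y ∈ (π.toFun z.1.2 : Set W)} := by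
    intro z hz
    refine sub_eq_res f hd γ.2.1 ?_ ?_
    · intro y hy
      rw [h]
      exact Set.mem_iUnion₂.mpr ⟨z, hz, hy⟩
    · exact congrArg Subtype.val z.2
  have hsnd : (fun q : PB (nerveMap f) π => q.1.2) '' τ.1 = σ' := τ.2.2
  have hmem : ∀ z ∈ τ.1, z.1.2 ∈ σ' := by
    intro z hz
    rw [← hsnd]
    exact ⟨z, hz, rfl⟩
  apply Subtype.ext
  rw [phiFib_val]
  apply Set.Subset.antisymm
  · rintro z ⟨hz1, hz2⟩
    have : z.1.2 ∈ (fun q : PB (nerveMap f) π => q.1.2) '' τ.1 := by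
      rw [hsnd]; exact hz1
    obtain ⟨w, hw, hwz⟩ := this
    have hwz2 : w.1.2 = z.1.2 := hwz
    have : w = z := by
      apply Subtype.ext
      apply Prod.ext
      · apply Subtype.ext
        rw [key w hw, hz2, hwz2]
      · exact hwz2
    exact this ▸ hw
  · intro z hz
    exact ⟨hmem z hz, key z hz⟩

lemma phi_inj (f : Map Γ K) (π : Map K' (nerveC K)) {σ' : Set V'} (hσ' : σ' ∈ K'.faces) :
    Function.Injective (phiFib f π hσ') := by
  intro γ₁ γ₂ h
  apply Subtype.ext
  rw [← phiSet_biUnion f π γ₁, ← phiSet_biUnion f π γ₂]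
  have : (phiFib f π hσ' γ₁).1 = (phiFib f π hσ' γ₂).1 := by rw [h]
  rw [phiFib_val, phiFib_val] at this
  rw [this]

/-- Commutation of `phiFib` with fiber restrictions. -/
lemma phi_res (f : Map Γ K) (π : Map K' (nerveC K)) {σ' σ₂ : Set V'}
    (hσ' : σ' ∈ K'.faces) (hσ₂ : σ₂ ∈ K'.faces) (hsub : σ₂ ⊆ σ')
    (γ : f.fiber (⋃ x' ∈ σ', ((π.toFun x' : K.Face) : Set W))) :
    (pbSnd (nerveMap f) π).resFiber hσ₂ hsub (phiFib f π hσ' γ)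
      = phiFib f π hσ₂ (f.resFiber (union_pi_mem π hσ₂)
          (Set.biUnion_subset_biUnion_left hsub) γ) := by
  apply Subtype.ext
  rw [resFiber_val, phiFib_val, phiFib_val, resFiber_val]
  ext z
  simp only [phiSet, Set.mem_setOf_eq]
  constructor
  · rintro ⟨⟨hz1, hz2⟩, hz3⟩
    refine ⟨hz3, ?_⟩
    rw [hz2]
    ext y
    simp only [Set.mem_setOf_eq]
    constructor
    · rintro ⟨hy1, hy2⟩
      exact ⟨⟨hy1, Set.mem_iUnion₂.mpr ⟨z.1.2, hz3, hy2⟩⟩, hy2⟩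
    · rintro ⟨⟨hy1, _⟩, hy2⟩
      exact ⟨hy1, hy2⟩
  · rintro ⟨hz1, hz2⟩
    refine ⟨⟨hsub hz1, ?_⟩, hz1⟩
    rw [hz2]
    ext y
    simp only [Set.mem_setOf_eq]
    constructor
    · rintro ⟨⟨hy1, _⟩, hy2⟩
      exact ⟨hy1, hy2⟩
    · rintro ⟨hy1, hy2⟩
      exact ⟨⟨hy1, Set.mem_iUnion₂.mpr ⟨z.1.2, hz1, hy2⟩⟩, hy2⟩

/-- Generic computation of the union of first components of a fiber element of
a pulled-back bundle: it is a simplex of `Γ` lying over the union `U(σ')`. -/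
lemma pb_fiber_union (f : Map Γ K) (π : Map K' (nerveC K)) {σ' : Set V'}
    (τ : (pbSnd (nerveMap f) π).fiber σ') :
    (⋃ z ∈ τ.1, ((z.1.1 : Γ.Face) : Set V)) ∈ Γ.faces ∧
    f.toFun '' (⋃ z ∈ τ.1, ((z.1.1 : Γ.Face) : Set V))
      = ⋃ x' ∈ σ', ((π.toFun x' : K.Face) : Set W) := by
  have hsnd : (fun q : PB (nerveMap f) π => q.1.2) '' τ.1 = σ' := τ.2.2
  constructor
  · have h := τ.2.1.1.2.2
    rwa [Set.biUnion_image] at h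
  · rw [Set.image_iUnion₂]
    apply Set.Subset.antisymm
    · refine Set.iUnion₂_subset ?_
      intro z hz
      have hz2 : z.1.2 ∈ σ' := by rw [← hsnd]; exact ⟨z, hz, rfl⟩
      have : f.toFun '' (z.1.1 : Set V) = (π.toFun z.1.2 : Set W) :=
        congrArg Subtype.val z.2
      rw [this]
      exact subset_unionPi π hz2
    · refine Set.iUnion₂_subset ?_
      intro x' hx'
      have : x' ∈ (fun q : PB (nerveMap f) π => q.1.2) '' τ.1 := by
        rw [hsnd]; exact hx'
      obtain ⟨z, hz, rfl⟩ := this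
      have : f.toFun '' (z.1.1 : Set V) = (π.toFun z.1.2 : Set W) :=
        congrArg Subtype.val z.2
      rw [← this]
      exact Set.subset_iUnion₂_of_subset z hz (le_refl _)

lemma EmpiricalModel.dist_congr' {R : Type*} [CommSemiring R] {f : Map Γ K}
    (p : EmpiricalModel R f) {σ τ : Set W} (h : σ = τ) (hσ : σ ∈ K.faces)
    (hτ : τ ∈ K.faces) {γ : f.fiber σ} {δ : f.fiber τ} (hγδ : γ.1 = δ.1) :
    (p.dist σ hσ).1 γ = (p.dist τ hτ).1 δ := by
  subst h
  obtain rfl : γ = δ := Subtype.ext hγδ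
  rfl

end Aux

/-- the push-forward of an empirical model along a type I
morphism is a well-defined empirical model on the pulled-back bundle, and
push-forward is compatible with Kleisli composition of simplicial relations
(under the canonical identification of the two iterated pull-backs). -/
theorem statement_9 {V : Type u} {W : Type v} {V' : Type w} {V'' : Type t}
    {Γ : SComplex V} {K : SComplex W} {K' : SComplex V'} {K'' : SComplex V''}
    (f : Map Γ K) (hf : f.IsBundle)
    (R : Type*) [CommSemiring R] (hR : ∀ a b : R, a + b = 0 → a = 0 ∧ b = 0)
    (p : EmpiricalModel R f) (π : Map K' (nerveC K)) (π' : Map K'' (nerveC K')) :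
    (∃ q : EmpiricalModel R (pbSnd (nerveMap f) π), piPushSpec f π p q) ∧
    (∀ q : EmpiricalModel R (pbSnd (nerveMap f) π), piPushSpec f π p q →
      ∀ q2 : EmpiricalModel R (pbSnd (nerveMap f) ((muMap K).comp ((nerveMap π).comp π'))),
        piPushSpec f ((muMap K).comp ((nerveMap π).comp π')) p q2 →
      ∀ q3 : EmpiricalModel R (pbSnd (nerveMap (pbSnd (nerveMap f) π)) π'),
        piPushSpec (pbSnd (nerveMap f) π) π' q q3 →
      ∀ σ'' (hσ'' : σ'' ∈ K''.faces)
        (A : (pbSnd (nerveMap f) ((muMap K).comp ((nerveMap π).comp π'))).fiber σ'')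
        (B : (pbSnd (nerveMap (pbSnd (nerveMap f) π)) π').fiber σ''),
        ((fun r : PB (nerveMap f) ((muMap K).comp ((nerveMap π).comp π')) =>
            (((r.1.1 : Γ.Face) : Set V), r.1.2)) '' A.1 =
          (fun r : PB (nerveMap (pbSnd (nerveMap f) π)) π' =>
            ((⋃ s ∈ ((r.1.1 : (pullback (nerveMap f) π).Face) :
                Set (PB (nerveMap f) π)), ((s.1.1 : Γ.Face) : Set V)), r.1.2)) '' B.1) →
        (q2.dist σ'' hσ'').1 A = (q3.dist σ'' hσ'').1 B) := by
  obtain ⟨hsurj, hloc, hd⟩ := hf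
  constructor
  · -- existence of the push-forward
    refine ⟨⟨fun σ' hσ' => Dist.map (phiFib f π hσ') (p.dist _ (union_pi_mem π hσ')), ?_⟩, ?_⟩
    · intro σ' hσ' σ₂ hσ₂ h
      rw [Dist.map_map]
      have hcomm : ((pbSnd (nerveMap f) π).resFiber hσ₂ h) ∘ (phiFib f π hσ')
          = (phiFib f π hσ₂) ∘ (f.resFiber (union_pi_mem π hσ₂)
              (Set.biUnion_subset_biUnion_left h)) :=
        funext (phi_res f π hσ' hσ₂ h)
      rw [hcomm, ← Dist.map_map, p.compat _ _ _ (union_pi_mem π hσ₂)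
        (Set.biUnion_subset_biUnion_left h)]
    · intro σ' hσ' γ' hu γ hγ
      have hφ : phiFib f π hσ' γ = γ' := phi_recover f π hd hσ' γ' γ hγ
      rw [← hφ]
      exact Dist.map_apply_inj (phi_inj f π hσ') _ γ
  · -- compatibility with Kleisli composition
    intro q hq q2 hq2 q3 hq3 σ'' hσ'' A B H
    have hU' : (⋃ x'' ∈ σ'', ((π'.toFun x'' : K'.Face) : Set V')) ∈ K'.faces :=
      union_pi_mem π' hσ''
    obtain ⟨hGface, hGim⟩ := pb_fiber_union (pbSnd (nerveMap f) π) π' B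
    obtain ⟨hFface, hFim⟩ := pb_fiber_union f ((muMap K).comp ((nerveMap π).comp π')) A
    have hUf : (⋃ x'' ∈ σ'', ((((muMap K).comp ((nerveMap π).comp π')).toFun x''
        : K.Face) : Set W)) ∈ K.faces :=
      union_pi_mem ((muMap K).comp ((nerveMap π).comp π')) hσ''
    -- the two base unions agree
    have hUU : (⋃ x' ∈ (⋃ x'' ∈ σ'', ((π'.toFun x'' : K'.Face) : Set V')),
        ((π.toFun x' : K.Face) : Set W))
        = ⋃ x'' ∈ σ'', ((((muMap K).comp ((nerveMap π).comp π')).toFun x''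
            : K.Face) : Set W) := by
      ext w
      constructor
      · intro hw
        obtain ⟨x', hx', hw⟩ := Set.mem_iUnion₂.mp hw
        obtain ⟨x'', hx'', hx'⟩ := Set.mem_iUnion₂.mp hx'
        refine Set.mem_iUnion₂.mpr ⟨x'', hx'', ?_⟩
        show w ∈ ⋃ σ ∈ π.toFun '' ((π'.toFun x'' : K'.Face) : Set V'), ((σ : K.Face) : Set W)
        rw [Set.biUnion_image]
        exact Set.mem_iUnion₂.mpr ⟨x', hx', hw⟩
      · intro hw
        obtain ⟨x'', hx'', hw⟩ := Set.mem_iUnion₂.mp hw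
        have hw' : w ∈ ⋃ σ ∈ π.toFun '' ((π'.toFun x'' : K'.Face) : Set V'),
            ((σ : K.Face) : Set W) := hw
        rw [Set.biUnion_image] at hw'
        obtain ⟨x', hx', hw'⟩ := Set.mem_iUnion₂.mp hw'
        exact Set.mem_iUnion₂.mpr ⟨x', Set.mem_iUnion₂.mpr ⟨x'', hx'', hx'⟩, hw'⟩
    -- the two total unions agree
    have hFG : (⋃ z ∈ A.1, ((z.1.1 : Γ.Face) : Set V))
        = ⋃ s ∈ (⋃ r ∈ B.1, ((r.1.1 : (pullback (nerveMap f) π).Face)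
            : Set (PB (nerveMap f) π))), ((s.1.1 : Γ.Face) : Set V) := by
      have h1 := congrArg (fun S : Set (Set V × V'') => ⋃ w ∈ S, w.1) H
      simp only [Set.biUnion_image] at h1
      rw [h1]
      ext y
      simp only [Set.mem_iUnion]
      tauto
    have e2 := hq2 σ'' hσ'' A hUf ⟨_, hFface, hFim⟩ rfl
    have e3 := hq3 σ'' hσ'' B hU'
      ⟨⋃ r ∈ B.1, ((r.1.1 : (pullback (nerveMap f) π).Face) : Set (PB (nerveMap f) π)),
        hGface, hGim⟩ rfl
    have e1 := hq _ hU'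
      ⟨⋃ r ∈ B.1, ((r.1.1 : (pullback (nerveMap f) π).Face) : Set (PB (nerveMap f) π)),
        hGface, hGim⟩
      (union_pi_mem π hU') ⟨_, hFface, hFim.trans hUU.symm⟩ hFG
    rw [e2, e3, e1]
    exact EmpiricalModel.dist_congr' p hUU.symm hUf (union_pi_mem π hU') rfl

end Ctx
end

section
/- Let f: Γ → Σ and g: Γ' → Σ be bundle scenarios, α: Γ → Γ' a simplicial complex map with g ∘ α = f, and p an empirical model on f. Then the family (α_*p)_σ := D_R(α|_{f⁻¹(σ)})(p_σ), σ ∈ Σ, is an empirical model on g. Moreover, if h: Γ'' → Σ is a bundle scenario and α': Γ' → Γ'' satisfies h ∘ α' = g, then (α' ∘ α)_* p = α'_*(α_* p). -/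
universe u v w t

namespace Ctx
open SComplex

theorem dist_map_map {R : Type*} [CommSemiring R] {U U' U'' : Type*}
    (k1 : U → U') (k2 : U' → U'') (p : Dist R U) :
    Dist.map k2 (Dist.map k1 p) = Dist.map (k2 ∘ k1) p :=
  Subtype.ext (Finsupp.mapDomain_comp).symm

/-- push-forward of empirical models along type II morphisms is
well defined and functorial. -/
theorem statement_10 {V : Type u} {V' : Type w} {V'' : Type t} {W : Type v}
    {Γ : SComplex V} {Γ' : SComplex V'} {Γ'' : SComplex V''} {K : SComplex W}
    (f : Map Γ K) (g : Map Γ' K) (h : Map Γ'' K)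
    (hf : f.IsBundle) (hg : g.IsBundle) (hh : h.IsBundle)
    (α : Map Γ Γ') (α' : Map Γ' Γ'')
    (hα : g.comp α = f) (hα' : h.comp α' = g) (hαα' : h.comp (α'.comp α) = f)
    (R : Type*) [CommSemiring R] (hR : ∀ a b : R, a + b = 0 → a = 0 ∧ b = 0)
    (p : EmpiricalModel R f) :
    (∀ σ (hσ : σ ∈ K.faces) σ' (hσ' : σ' ∈ K.faces) (hsub : σ' ⊆ σ),
      Dist.map (g.resFiber hσ' hsub) (Dist.map (pushFiber f g α hα σ) (p.dist σ hσ)) =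
        Dist.map (pushFiber f g α hα σ') (p.dist σ' hσ')) ∧
    (∀ σ (hσ : σ ∈ K.faces),
      Dist.map (pushFiber f h (α'.comp α) hαα' σ) (p.dist σ hσ) =
        Dist.map (pushFiber g h α' hα' σ) (Dist.map (pushFiber f g α hα σ) (p.dist σ hσ))) := by
  have hga : g.toFun ∘ α.toFun = f.toFun := congrArg Map.toFun hα
  constructor
  · intro σ hσ σ' hσ' hsub
    rw [dist_map_map, ← p.compat σ hσ σ' hσ' hsub, dist_map_map]
    congr 1
    funext γ
    apply Subtype.ext
    show {y | y ∈ α.toFun '' γ.1 ∧ g.toFun y ∈ σ'}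
        = α.toFun '' {x | x ∈ γ.1 ∧ f.toFun x ∈ σ'}
    ext y
    constructor
    · rintro ⟨⟨x, hx, rfl⟩, hgy⟩
      refine ⟨x, ⟨hx, ?_⟩, rfl⟩
      rw [← hga]; exact hgy
    · rintro ⟨x, ⟨hx, hfx⟩, rfl⟩
      refine ⟨⟨x, hx, rfl⟩, ?_⟩
      show (g.toFun ∘ α.toFun) x ∈ σ'
      rw [hga]; exact hfx
  · intro σ hσ
    rw [dist_map_map]
    congr 1
    funext γ
    apply Subtype.ext
    show (α'.comp α).toFun '' γ.1 = α'.toFun '' (α.toFun '' γ.1)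
    rw [Set.image_image]
    rfl

end Ctx
end

section
/- For every scenario (Σ, O), the map η_{(Σ,O)} sending an empirical model e on (Σ, O) to the family of distributions on the fibers of f_{(Σ,O)} defined by assigning, for each simplex σ ∈ Σ, mass e_σ(s) to the simplex {(x, s(x)) : x ∈ σ} ∈ f_{(Σ,O)}⁻¹(σ) for each s ∈ E_O(σ), is a well-defined bijection from the set Emp(Σ, O) of empirical models on (Σ, O) onto the set bEmp(f_{(Σ,O)}) of empirical models on the bundle scenario f_{(Σ,O)}: E_O Σ → Σ. -/
universe u v w t

namespace Ctx
open SComplex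


section Aux

variable {V : Type u}

lemma Dist.map_comp' {R : Type t} [CommSemiring R] {U : Type u} {U' : Type v} {U'' : Type w}
    (g : U → U') (h : U' → U'') (p : Dist R U) :
    Dist.map h (Dist.map g p) = Dist.map (h ∘ g) p := by
  apply Subtype.ext
  simp [Dist.map, Finsupp.mapDomain_comp]

lemma Dist.map_id' {R : Type t} [CommSemiring R] {U : Type u} (p : Dist R U) :
    Dist.map id p = p :=
  Subtype.ext Finsupp.mapDomain_id

lemma Dist.map_injective' {R : Type t} [CommSemiring R] {U : Type u} {U' : Type v}
    {g : U → U'} (hg : Function.Injective g) :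
    Function.Injective (Dist.map (R := R) g) := fun p q h =>
  Subtype.ext (Finsupp.mapDomain_injective hg (congrArg Subtype.val h))

lemma graphFiber_injective (K : SComplex V) (O : V → Type v) {σ : Set V} (hσ : σ ∈ K.faces) :
    Function.Injective (graphFiber K O hσ) := by
  intro s t h
  funext x
  have hx : (⟨x.1, s x⟩ : (y : V) × O y) ∈ (graphFiber K O hσ s).1 := by
    refine ⟨x.2, ?_⟩
    congr
  rw [h] at hx
  obtain ⟨h1, h2⟩ := hx
  exact h2

lemma graphFiber_surjective (K : SComplex V) (O : V → Type v) {σ : Set V} (hσ : σ ∈ K.faces) :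
    Function.Surjective (graphFiber K O hσ) := by
  intro γ
  obtain ⟨γset, ⟨hfaces, hinj⟩, himg⟩ := γ
  have hmem : ∀ x : σ, ∃ p, p ∈ γset ∧ Sigma.fst p = x.1 := by
    intro x
    have hx : x.1 ∈ Sigma.fst '' γset := himg ▸ x.2
    obtain ⟨p, hp, hpx⟩ := hx
    exact ⟨p, hp, hpx⟩
  choose p hp hpx using hmem
  refine ⟨fun x => cast (congrArg O (hpx x)) (p x).2, ?_⟩
  apply Subtype.ext
  have hmk : ∀ x : σ, p x = ⟨x.1, cast (congrArg O (hpx x)) (p x).2⟩ := by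
    intro x
    exact Sigma.ext (hpx x) (HEq.symm (cast_heq _ _))
  show {q : (x : V) × O x | ∃ h : q.1 ∈ σ, q.2 = cast _ (p ⟨q.1, h⟩).2} = γset
  ext q
  constructor
  · rintro ⟨h, h2⟩
    have : q = p ⟨q.1, h⟩ := by
      rw [hmk ⟨q.1, h⟩]
      exact Sigma.ext rfl (heq_of_eq h2)
    rw [this]; exact hp _
  · intro hq
    have hq1 : q.1 ∈ σ := himg ▸ ⟨q, hq, rfl⟩
    have hpq : p ⟨q.1, hq1⟩ = q := by
      apply hinj (hp ⟨q.1, hq1⟩) hq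
      exact hpx ⟨q.1, hq1⟩
    refine ⟨hq1, ?_⟩
    have := (hmk ⟨q.1, hq1⟩).symm.trans hpq
    exact (eq_of_heq (Sigma.ext_iff.mp this).2).symm

lemma resFiber_graphFiber (K : SComplex V) (O : V → Type v) {σ σ' : Set V}
    (hσ : σ ∈ K.faces) (hσ' : σ' ∈ K.faces) (h : σ' ⊆ σ) (s : ∀ x : σ, O x.1) :
    (eventProj K O).resFiber hσ' h (graphFiber K O hσ s)
      = graphFiber K O hσ' (fun x => s ⟨x.1, h x.2⟩) := by
  apply Subtype.ext
  show {y : (x : V) × O x | y ∈ (graphFiber K O hσ s).1 ∧ (eventProj K O).toFun y ∈ σ'}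
      = (graphFiber K O hσ' (fun x => s ⟨x.1, h x.2⟩)).1
  ext q
  constructor
  · rintro ⟨⟨hq, hq2⟩, hq'⟩
    exact ⟨hq', hq2⟩
  · rintro ⟨hq', hq2⟩
    exact ⟨⟨h hq', hq2⟩, hq'⟩

/-- The bijection between outcome assignments and fiber elements. -/
noncomputable def graphEquiv (K : SComplex V) (O : V → Type v) {σ : Set V}
    (hσ : σ ∈ K.faces) : (∀ x : σ, O x.1) ≃ (eventProj K O).fiber σ :=
  Equiv.ofBijective _ ⟨graphFiber_injective K O hσ, graphFiber_surjective K O hσ⟩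

end Aux

/-- `η` is a well-defined bijection between empirical models on
a scenario and empirical models on the associated event bundle scenario. -/
theorem statement_11 {V : Type u} (K : SComplex V) (O : V → Type v)
    (hO : ∀ x, Nonempty (O x))
    (R : Type t) [CommSemiring R] (hR : ∀ a b : R, a + b = 0 → a = 0 ∧ b = 0) :
    ∃ η : ScenEmp R K O → EmpiricalModel R (eventProj K O),
      (∀ e σ (hσ : σ ∈ K.faces),
        (η e).dist σ hσ = Dist.map (graphFiber K O hσ) (e.dist σ hσ)) ∧
      Function.Bijective η := by
  classical
  refine ⟨fun e => ⟨fun σ hσ => Dist.map (graphFiber K O hσ) (e.dist σ hσ), ?_⟩, ?_, ?_, ?_⟩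
  · intro σ hσ σ' hσ' h
    rw [Dist.map_comp']
    have hfun : ((eventProj K O).resFiber hσ' h) ∘ (graphFiber K O hσ)
        = (graphFiber K O hσ') ∘ (fun (s : ∀ x : σ, O x.1) (x : σ') => s ⟨x.1, h x.2⟩) := by
      funext s
      exact resFiber_graphFiber K O hσ hσ' h s
    rw [hfun, ← Dist.map_comp', e.compat σ hσ σ' hσ' h]
  · intro e σ hσ
    rfl
  · -- injective
    intro e₁ e₂ he
    obtain ⟨d₁, c₁⟩ := e₁
    obtain ⟨d₂, c₂⟩ := e₂
    simp only [EmpiricalModel.mk.injEq, ScenEmp.mk.injEq] at he ⊢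
    funext σ hσ
    exact Dist.map_injective' (graphFiber_injective K O hσ)
      (congrFun (congrFun he σ) hσ)
  · -- surjective
    intro q
    have key : ∀ σ (hσ : σ ∈ K.faces),
        Dist.map (graphFiber K O hσ) (Dist.map (graphEquiv K O hσ).symm (q.dist σ hσ))
          = q.dist σ hσ := by
      intro σ hσ
      rw [Dist.map_comp']
      have : (graphFiber K O hσ) ∘ ⇑(graphEquiv K O hσ).symm = id := by
        funext γ
        exact (graphEquiv K O hσ).apply_symm_apply γ
      rw [this, Dist.map_id']
    refine ⟨⟨fun σ hσ => Dist.map (graphEquiv K O hσ).symm (q.dist σ hσ), ?_⟩, ?_⟩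
    · intro σ hσ σ' hσ' h
      apply Dist.map_injective' (graphFiber_injective K O hσ')
      rw [key σ' hσ', Dist.map_comp', Dist.map_comp']
      have hfun : ((graphFiber K O hσ') ∘ fun (s : ∀ x : σ, O x.1) (x : σ') =>
          s ⟨x.1, h x.2⟩) ∘ ⇑(graphEquiv K O hσ).symm
            = (eventProj K O).resFiber hσ' h := by
        funext γ
        show graphFiber K O hσ' (fun x : σ' => (graphEquiv K O hσ).symm γ ⟨x.1, h x.2⟩) = _
        rw [← resFiber_graphFiber K O hσ hσ' h ((graphEquiv K O hσ).symm γ)]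
        congr 1
        exact (graphEquiv K O hσ).apply_symm_apply γ
      rw [hfun, q.compat σ hσ σ' hσ' h]
    · cases q with
      | mk d c =>
        simp only [EmpiricalModel.mk.injEq]
        funext σ hσ
        exact key σ hσ


end Ctx
end

section
/- If f: Γ → Σ is a bundle scenario of simplicial complexes, then the induced map of nerve spaces Nf: NΓ → NΣ is a simplicial scenario: it is surjective in every degree, it has the right lifting property with respect to every coface map d^i: Δ[n-1] → Δ[n], and it has the right lifting property with respect to every codegeneracy map s^j: Δ[n] → Δ[n-1]. -/
universe u v w t

namespace Ctx

open CategoryTheory SComplex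

/-! ### Simplicial sets: the nerve space of a simplicial complex -/

/-- The commutative monoid of subsets of `V` under union (with unit `∅`). -/
def UM (V : Type u) : Type u := Set V

namespace UM

/-- View an element of the union monoid as a set. -/
def toSet {V : Type u} (a : UM V) : Set V := a

/-- View a set as an element of the union monoid. -/
def ofSet {V : Type u} (a : Set V) : UM V := a

end UM

instance {V : Type u} : Monoid (UM V) where
  mul a b := UM.ofSet (a.toSet ∪ b.toSet)
  one := UM.ofSet ∅
  mul_assoc a b c := Set.union_assoc _ _ _
  one_mul := Set.empty_union
  mul_one := Set.union_empty

@[simp] lemma UM.toSet_mul {V : Type u} (a b : UM V) :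
    (a * b).toSet = a.toSet ∪ b.toSet := rfl

@[simp] lemma UM.toSet_one {V : Type u} : (1 : UM V).toSet = (∅ : Set V) := rfl

/-- The nerve of the one-object category on the union monoid: the ambient
simplicial set whose `n`-simplices are `n`-tuples of subsets of `V` (recorded
as a composable sequence of arrows). -/
def B (V : Type u) : SSet.{u} := nerve (SingleObj (UM V))

/-- The total subset (the "union of the entries") of a simplex of `B V`:
the value of the corresponding functor on the morphism `0 ⟶ last`. -/
def totM {V : Type u} {Δ : SimplexCategoryᵒᵖ} (x : (B V).obj Δ) : UM V :=
  x.map (homOfLE (Fin.zero_le (Fin.last Δ.unop.len)))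

/-- The total subset of a simplex of `B V`, as a set. -/
def tot {V : Type u} {Δ : SimplexCategoryᵒᵖ} (x : (B V).obj Δ) : Set V :=
  (totM x).toSet

lemma tot_whisker_subset {V : Type u} {m n : ℕ} (g : Fin (m + 1) ⥤ Fin (n + 1))
    (x : ComposableArrows (SingleObj (UM V)) n) :
    UM.toSet ((x.whiskerLeft g).map (homOfLE (Fin.zero_le (Fin.last m))))
      ⊆ UM.toSet (x.map (homOfLE (Fin.zero_le (Fin.last n)))) := by
  intro a ha
  have comp_eq : homOfLE (Fin.zero_le (Fin.last n))
      = homOfLE (Fin.zero_le (g.obj 0)) ≫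
          (g.map (homOfLE (Fin.zero_le (Fin.last m))) ≫
            homOfLE (Fin.le_last (g.obj (Fin.last m)))) :=
    Subsingleton.elim _ _
  have e : x.map (homOfLE (Fin.zero_le (Fin.last n)))
      = x.map (homOfLE (Fin.zero_le (g.obj 0))) ≫
          (x.map (g.map (homOfLE (Fin.zero_le (Fin.last m)))) ≫
            x.map (homOfLE (Fin.le_last (g.obj (Fin.last m))))) := by
    rw [comp_eq, x.map_comp, x.map_comp]
  have ha' : a ∈ UM.toSet (x.map (g.map (homOfLE (Fin.zero_le (Fin.last m))))) := ha
  rw [e, SingleObj.comp_as_mul, SingleObj.comp_as_mul, UM.toSet_mul, UM.toSet_mul]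
  exact Or.inl (Or.inr ha')

lemma tot_map_subset {V : Type u} {Δ Δ' : SimplexCategoryᵒᵖ} (θ : Δ ⟶ Δ')
    (x : (B V).obj Δ) : tot ((B V).map θ x) ⊆ tot x :=
  tot_whisker_subset (SimplexCategory.toCat.map θ.unop).toFunctor x

/-- The nerve space `N K` of a simplicial complex `K`: the simplicial subset
of `B V` consisting of the tuples of subsets whose union is empty or a
simplex of `K`.  (Each entry is then automatically empty or a simplex.) -/
def NC {V : Type u} (K : SComplex V) : SSet.{u} where
  obj Δ := {x : (B V).obj Δ // tot x = ∅ ∨ tot x ∈ K.faces}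
  map θ := TypeCat.ofHom fun x => ⟨(B V).map θ x.1, by
    rcases x.2 with h | h
    · left
      have hsub := tot_map_subset θ x.1
      rw [h] at hsub
      exact Set.subset_empty_iff.mp hsub
    · by_cases h0 : tot ((B V).map θ x.1) = ∅
      · exact Or.inl h0
      · exact Or.inr (K.down_closed h (tot_map_subset θ x.1)
          (Set.nonempty_iff_ne_empty.mpr h0))⟩
  map_id Δ := by
    refine ConcreteCategory.hom_ext _ _ fun x => ?_
    exact Subtype.ext (ConcreteCategory.congr_hom ((B V).map_id Δ) x.1)
  map_comp θ θ' := by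
    refine ConcreteCategory.hom_ext _ _ fun x => ?_
    exact Subtype.ext (ConcreteCategory.congr_hom ((B V).map_comp θ θ') x.1)

/-- The map of ambient simplicial sets induced by a monoid homomorphism of
union monoids. -/
def inducedB {V W : Type u} (h : UM V →* UM W) : B V ⟶ B W where
  app Δ := TypeCat.ofHom fun x => x ⋙ (SingleObj.mapHom (UM V) (UM W)) h
  naturality Δ Δ' θ := rfl

lemma totM_inducedB {V W : Type u} (h : UM V →* UM W) {Δ : SimplexCategoryᵒᵖ}
    (x : (B V).obj Δ) : totM ((inducedB h).app Δ x) = h (totM x) := rfl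

/-- The map of nerve spaces induced by a monoid homomorphism of union monoids
carrying faces to faces. -/
def inducedNC {V W : Type u} {Γ : SComplex V} {K : SComplex W} (h : UM V →* UM W)
    (hh : ∀ σ : Set V, σ ∈ Γ.faces → (h (UM.ofSet σ)).toSet ∈ K.faces) :
    NC Γ ⟶ NC K where
  app Δ := TypeCat.ofHom fun x => ⟨(inducedB h).app Δ x.1, by
    rcases x.2 with h0 | hfc
    · left
      have h1 : totM x.1 = 1 := h0
      show (totM ((inducedB h).app Δ x.1)).toSet = ∅
      rw [totM_inducedB, h1, map_one]
      rfl
    · right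
      exact hh (tot x.1) hfc⟩
  naturality Δ Δ' θ := by
    refine ConcreteCategory.hom_ext _ _ fun x => ?_
    exact Subtype.ext rfl

/-- The image monoid homomorphism of union monoids induced by a function. -/
def imageHom {V W : Type u} (f : V → W) : UM V →* UM W where
  toFun a := UM.ofSet (f '' a.toSet)
  map_one' := congrArg UM.ofSet (Set.image_empty f)
  map_mul' a b := congrArg UM.ofSet (Set.image_union f a.toSet b.toSet)

/-- The map of nerve spaces `N f : N Γ → N K` induced by a simplicial complex
map `f : Γ → K`, applying `f` termwise (with `f(∅) = ∅`). -/
def NMap {V W : Type u} {Γ : SComplex V} {K : SComplex W} (f : Map Γ K) :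
    NC Γ ⟶ NC K :=
  inducedNC (imageHom f.toFun) (fun _ hσ => f.map_faces hσ)

/-- The union monoid homomorphism induced by a simplicial relation
`π : K' → ĤN K`. -/
def relHom {V' W : Type u} {K' : SComplex V'} {K : SComplex W}
    (π : Map K' (nerveC K)) : UM V' →* UM W where
  toFun a := UM.ofSet (⋃ x ∈ a.toSet, ((π.toFun x : K.Face) : Set W))
  map_one' := congrArg UM.ofSet (by simp [UM.toSet, UM.ofSet])
  map_mul' a b := congrArg UM.ofSet (Set.biUnion_union a.toSet b.toSet _)

/-- The map of nerve spaces `T(π) : N K' → N K` induced by a simplicial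
relation `π : K' → ĤN K`, applying `σ ↦ π̄(σ)` termwise. -/
def Tmap {V' W : Type u} {K' : SComplex V'} {K : SComplex W}
    (π : Map K' (nerveC K)) : NC K' ⟶ NC K :=
  inducedNC (relHom π) (fun σ hσ => by
    have h2 := (π.map_faces hσ).2.2
    rwa [Set.biUnion_image] at h2)

/-! ### Distributions on simplicial sets -/

/-- The distribution functor on the category of types. -/
noncomputable def DistF (R : Type u) [CommSemiring R] : Type u ⥤ Type u where
  obj U := Dist R U
  map g := TypeCat.ofHom fun p => Dist.map g p
  map_id U := by
    refine ConcreteCategory.hom_ext _ _ fun p => ?_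
    exact Subtype.ext Finsupp.mapDomain_id
  map_comp g g' := by
    refine ConcreteCategory.hom_ext _ _ fun p => ?_
    exact Subtype.ext (Finsupp.mapDomain_comp (v := p.1) (f := ⇑(ConcreteCategory.hom g))
      (g := ⇑(ConcreteCategory.hom g')))

/-- The Dirac natural transformation `δ_X : X → D_R X`. -/
noncomputable def diracN (R : Type u) [CommSemiring R] (X : SSet.{u}) :
    X ⟶ X ⋙ DistF R where
  app Δ := TypeCat.ofHom fun x => Dist.pure x
  naturality Δ Δ' θ := by
    refine ConcreteCategory.hom_ext _ _ fun x => ?_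
    exact Subtype.ext (Finsupp.mapDomain_single).symm

/-- A simplicial distribution on a simplicial set map `f : E → X`:
a simplicial set map `p : X → D_R E` with `D_R f ∘ p = δ_X`. -/
noncomputable def SDist (R : Type u) [CommSemiring R] {E X : SSet.{u}} (f : E ⟶ X) :
    Type u :=
  {p : X ⟶ E ⋙ DistF R // p ≫ Functor.whiskerRight f (DistF R) = diracN R X}

/-- Sections of a simplicial set map. -/
def SSetSection {E X : SSet.{u}} (f : E ⟶ X) : Type u := {s : X ⟶ E // s ≫ f = 𝟙 X}

/-- Noncontextuality of a simplicial distribution: it is a mixture of the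
deterministic distributions coming from sections, i.e. it is in the image of
`Θ : D_R(sections of f) → sDist(f)`. -/
noncomputable def SSetNC (R : Type u) [CommSemiring R] {E X : SSet.{u}} (f : E ⟶ X)
    (q : SDist R f) : Prop :=
  ∃ d : Dist R (SSetSection f), ∀ (Δ : SimplexCategoryᵒᵖ) (x : X.obj Δ),
    q.1.app Δ x = Dist.map (fun s : SSetSection f => s.1.app Δ x) d

/-- The defining property of the simplicial distribution `N p` on `N f`
associated to an empirical model `p` on a bundle scenario `f`:
its value on an `n`-simplex `(σ₁,…,σₙ)` of `N K` at `(γ₁,…,γₙ)` is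
`p_{σ₁∪⋯∪σₙ}(γ₁∪⋯∪γₙ)` when `(N f)(γ⃗) = σ⃗` and the union is nonempty,
is `0` when `(N f)(γ⃗) ≠ σ⃗`, and is the Dirac distribution at the tuple of
empty sets when all the `σᵢ` are empty. -/
def NpSpec {V W : Type u} {Γ : SComplex V} {K : SComplex W} (f : Map Γ K)
    (R : Type u) [CommSemiring R] (p : EmpiricalModel R f)
    (q : NC K ⟶ NC Γ ⋙ DistF R) : Prop :=
  (∀ (Δ : SimplexCategoryᵒᵖ) (x : (NC K).obj Δ) (y : (NC Γ).obj Δ),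
      (NMap f).app Δ y = x →
      ∀ (hu : tot x.1 ∈ K.faces) (γ : f.fiber (tot x.1)),
        (γ : Set V) = tot y.1 → (q.app Δ x).1 y = (p.dist _ hu).1 γ) ∧
  (∀ (Δ : SimplexCategoryᵒᵖ) (x : (NC K).obj Δ) (y : (NC Γ).obj Δ),
      (NMap f).app Δ y ≠ x → (q.app Δ x).1 y = 0) ∧
  (∀ (Δ : SimplexCategoryᵒᵖ) (x : (NC K).obj Δ), tot x.1 = ∅ →
      ∀ y : (NC Γ).obj Δ, tot y.1 = ∅ → q.app Δ x = Dist.pure y)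

/-- The `i`-th edge of an `n`-simplex of a nerve space. -/
def edgeN {V : Type u} {K : SComplex V} {n : ℕ} (i : Fin n)
    (x : (NC K).obj (Opposite.op (SimplexCategory.mk n))) :
    (NC K).obj (Opposite.op (SimplexCategory.mk 1)) :=
  (NC K).map (SimplexCategory.mkOfSucc i).op x

end Ctx

namespace Ctx
open CategoryTheory SComplex

section Statement12Aux

variable {V W : Type u}

/-- Conjugation by `eqToHom`s in a single-object category is heterogeneously trivial. -/
lemma singleObj_eqToHom_conj {M : Type u} [Monoid M] {a b c d : SingleObj M}
    (h₁ : a = b) (h₂ : c = d) (g : b ⟶ c) :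
    HEq (eqToHom h₁ ≫ g ≫ eqToHom h₂) g := by
  subst h₁; subst h₂; simp

/-- Two simplices of `B V` are equal as soon as they agree on all arrows. -/
lemma BV_ext {Δ : SimplexCategoryᵒᵖ} (x y : (B V).obj Δ)
    (h : ∀ (i j : Fin (Δ.unop.len + 1)) (a : i ⟶ j),
      UM.toSet (x.map a) = UM.toSet (y.map a)) : x = y := by
  refine CategoryTheory.Functor.ext (fun i => Subsingleton.elim _ _) ?_
  intro i j a
  exact (h i j a).trans (eq_of_heq (singleObj_eqToHom_conj
    (Subsingleton.elim (x.obj i) (y.obj i)) (Subsingleton.elim (y.obj j) (x.obj j))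
    (y.map a)).symm)

/-- Every arrow of a simplex of `B V` is contained in its total subset. -/
lemma toSet_map_subset_tot {Δ : SimplexCategoryᵒᵖ} (x : (B V).obj Δ)
    {i j : Fin (Δ.unop.len + 1)} (a : i ⟶ j) :
    UM.toSet (x.map a) ⊆ tot x := by
  intro v hv
  have comp_eq : homOfLE (Fin.zero_le (Fin.last Δ.unop.len)) =
      homOfLE (Fin.zero_le i) ≫ a ≫ homOfLE (Fin.le_last j) := Subsingleton.elim _ _
  have e : x.map (homOfLE (Fin.zero_le (Fin.last Δ.unop.len))) =
      x.map (homOfLE (Fin.zero_le i)) ≫ (x.map a ≫ x.map (homOfLE (Fin.le_last j))) := by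
    rw [comp_eq, x.map_comp, x.map_comp]
  show v ∈ UM.toSet (totM x)
  show v ∈ UM.toSet (x.map (homOfLE (Fin.zero_le (Fin.last Δ.unop.len))))
  rw [e, SingleObj.comp_as_mul, SingleObj.comp_as_mul, UM.toSet_mul, UM.toSet_mul]
  exact Or.inl (Or.inr hv)

/-- Arrow-level computation of `inducedB`. -/
lemma inducedB_map_arrow (h : UM V →* UM W) {Δ : SimplexCategoryᵒᵖ}
    (x : (B V).obj Δ) {i j : Fin (Δ.unop.len + 1)} (a : i ⟶ j) :
    (((inducedB h).app Δ x).map a : UM W) = h (x.map a) := rfl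

/-- Over a simplex of a bundle scenario, subsets with equal image agree. -/
lemma set_unique {Γ : SComplex V} {K : SComplex W} (f : Map Γ K) (hd : f.DiscV)
    {gh A B : Set V} (hγ : gh = ∅ ∨ gh ∈ Γ.faces) (hA : A ⊆ gh) (hB : B ⊆ gh)
    (h : f.toFun '' A = f.toFun '' B) : A = B := by
  rcases hγ with rfl | hγ
  · rw [Set.subset_empty_iff.mp hA, Set.subset_empty_iff.mp hB]
  · have key : ∀ A B : Set V, A ⊆ gh → B ⊆ gh →
        f.toFun '' A = f.toFun '' B → A ⊆ B := by
      intro A B hA hB h v hv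
      have : f.toFun v ∈ f.toFun '' B := h ▸ ⟨v, hv, rfl⟩
      obtain ⟨w, hw, hfw⟩ := this
      by_cases hvw : v = w
      · exact hvw ▸ hw
      · exfalso
        refine hd w v (fun e => hvw e.symm) hfw ?_
        refine Γ.down_closed hγ ?_ ⟨w, Or.inl rfl⟩
        intro z hz
        rcases hz with rfl | rfl
        · exact hB hw
        · exact hA hv
    exact Set.Subset.antisymm (key A B hA hB h) (key B A hB hA h.symm)

/-- The pull-back monoid homomorphism relative to a subset `A` of vertices. -/
def pbHom (g : V → W) (A : Set V) : UM W →* UM V where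
  toFun σ := UM.ofSet {v | v ∈ A ∧ g v ∈ UM.toSet σ}
  map_one' := by
    show UM.ofSet {v | v ∈ A ∧ g v ∈ UM.toSet 1} = UM.ofSet ∅
    exact congrArg UM.ofSet (by ext v; simp)
  map_mul' a b := by
    show UM.ofSet {v | v ∈ A ∧ g v ∈ UM.toSet (a * b)} =
      UM.ofSet ({v | v ∈ A ∧ g v ∈ UM.toSet a} ∪ {v | v ∈ A ∧ g v ∈ UM.toSet b})
    refine congrArg UM.ofSet ?_
    ext v
    simp only [UM.toSet_mul, Set.mem_union, Set.mem_setOf_eq, Set.mem_union]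
    tauto

/-- The total subset of the image of a simplex under `N f`. -/
lemma tot_NMap {Γ : SComplex V} {K : SComplex W} (f : Map Γ K) {Δ : SimplexCategoryᵒᵖ}
    (y : (NC Γ).obj Δ) : tot ((NMap f).app Δ y).1 = f.toFun '' tot y.1 := rfl

/-- Arrow-level computation of `N f`. -/
lemma NMap_map_arrow {Γ : SComplex V} {K : SComplex W} (f : Map Γ K) {Δ : SimplexCategoryᵒᵖ}
    (y : (NC Γ).obj Δ) {i j : Fin (Δ.unop.len + 1)} (a : i ⟶ j) :
    UM.toSet (((NMap f).app Δ y).1.map a) = f.toFun '' UM.toSet (y.1.map a) := rfl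

/-- Construction of a lift of a simplex of `N K` over a given simplex `γ̂` of `Γ`
mapping onto its total subset. -/
lemma lift_spec {Γ : SComplex V} {K : SComplex W} (f : Map Γ K) {Δ : SimplexCategoryᵒᵖ}
    (x : (NC K).obj Δ) (gh : Set V) (hγ : gh = ∅ ∨ gh ∈ Γ.faces)
    (him : f.toFun '' gh = tot x.1) :
    ∃ yh : (NC Γ).obj Δ, (NMap f).app Δ yh = x ∧ tot yh.1 = gh := by
  have htot : tot ((inducedB (pbHom f.toFun gh)).app Δ x.1) = gh := by
    show UM.toSet (totM ((inducedB (pbHom f.toFun gh)).app Δ x.1)) = gh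
    rw [totM_inducedB]
    show {v | v ∈ gh ∧ f.toFun v ∈ UM.toSet (totM x.1)} = gh
    ext v
    refine ⟨fun hv => hv.1, fun hv => ⟨hv, ?_⟩⟩
    have : f.toFun v ∈ f.toFun '' gh := ⟨v, hv, rfl⟩
    rwa [him] at this
  refine ⟨⟨(inducedB (pbHom f.toFun gh)).app Δ x.1, ?_⟩, ?_, htot⟩
  · rcases hγ with rfl | hγ
    · exact Or.inl htot
    · exact Or.inr (by rw [htot]; exact hγ)
  · apply Subtype.ext
    apply BV_ext
    intro i j a
    show UM.toSet ((imageHom f.toFun) ((pbHom f.toFun gh) (x.1.map a))) = UM.toSet (x.1.map a)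
    show f.toFun '' {v | v ∈ gh ∧ f.toFun v ∈ UM.toSet (x.1.map a)} = UM.toSet (x.1.map a)
    ext w
    constructor
    · rintro ⟨v, ⟨_, hv⟩, rfl⟩
      exact hv
    · intro hw
      have hw' : w ∈ tot x.1 := toSet_map_subset_tot x.1 a hw
      rw [← him] at hw'
      obtain ⟨v, hv, rfl⟩ := hw'
      exact ⟨v, ⟨hv, hw⟩, rfl⟩

/-- Injectivity of `N f` on simplices lying over a common simplex `γ̂`. -/
lemma map_inj {Γ : SComplex V} {K : SComplex W} (f : Map Γ K) (hd : f.DiscV)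
    {Δ : SimplexCategoryᵒᵖ} (gh : Set V) (hγ : gh = ∅ ∨ gh ∈ Γ.faces)
    (y₁ y₂ : (NC Γ).obj Δ) (h₁ : tot y₁.1 ⊆ gh) (h₂ : tot y₂.1 ⊆ gh)
    (h : (NMap f).app Δ y₁ = (NMap f).app Δ y₂) : y₁ = y₂ := by
  apply Subtype.ext
  apply BV_ext
  intro i j a
  have harr : f.toFun '' UM.toSet (y₁.1.map a) = f.toFun '' UM.toSet (y₂.1.map a) := by
    rw [← NMap_map_arrow f y₁ a, ← NMap_map_arrow f y₂ a, h]
  exact set_unique f hd hγ ((toSet_map_subset_tot y₁.1 a).trans h₁)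
    ((toSet_map_subset_tot y₂.1 a).trans h₂) harr

/-- The key lifting lemma: `N f` of a bundle scenario has the unique-lifting
property against every simplicial operator. -/
lemma exists_lift {Γ : SComplex V} {K : SComplex W} (f : Map Γ K) (hf : f.IsBundle)
    {m n : SimplexCategory} (θ : m ⟶ n)
    (y : (NC Γ).obj (Opposite.op m)) (x : (NC K).obj (Opposite.op n))
    (h : (NMap f).app (Opposite.op m) y = (NC K).map θ.op x) :
    ∃ yh : (NC Γ).obj (Opposite.op n),
      (NC Γ).map θ.op yh = y ∧ (NMap f).app (Opposite.op n) yh = x := by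
  have hty : f.toFun '' tot y.1 = tot ((B W).map θ.op x.1) := by
    rw [← tot_NMap f y, h]; rfl
  have htsub : tot ((B W).map θ.op x.1) ⊆ tot x.1 := tot_map_subset θ.op x.1
  obtain ⟨gh, hγ, him, hsuby⟩ :
      ∃ gh : Set V, (gh = ∅ ∨ gh ∈ Γ.faces) ∧ f.toFun '' gh = tot x.1 ∧ tot y.1 ⊆ gh := by
    rcases x.2 with hx0 | hxf
    · refine ⟨∅, Or.inl rfl, by rw [Set.image_empty, hx0], ?_⟩
      have h1 : f.toFun '' tot y.1 = ∅ := by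
        rw [hty]
        exact Set.subset_empty_iff.mp (Set.Subset.trans htsub (le_of_eq hx0))
      rw [Set.image_eq_empty.mp h1]
    · rcases y.2 with hy0 | hyf
      · obtain ⟨gh, hghf, hgh⟩ := hf.1 (tot x.1) hxf
        exact ⟨gh, Or.inr hghf, hgh, by rw [hy0]; exact Set.empty_subset _⟩
      · obtain ⟨gh, ⟨hghf, hsub⟩, hgh⟩ := hf.2.1 (tot y.1) hyf (tot x.1)
          ⟨hxf, by rw [hty]; exact htsub⟩
        exact ⟨gh, Or.inr hghf, hgh, hsub⟩
  obtain ⟨yh, hl, htl⟩ := lift_spec f x gh hγ him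
  refine ⟨yh, ?_, hl⟩
  apply map_inj f hf.2.2 gh hγ
  · exact (tot_map_subset θ.op yh.1).trans (le_of_eq htl)
  · exact hsuby
  · have hnat : (NMap f).app (Opposite.op m) ((NC Γ).map θ.op yh) =
        (NC K).map θ.op ((NMap f).app (Opposite.op n) yh) :=
      ConcreteCategory.congr_hom ((NMap f).naturality θ.op) yh
    rw [hnat, hl, ← h]

lemma yonedaEquiv_comp {X Y : SSet.{u}} {n : SimplexCategory}
    (u : SSet.stdSimplex.obj n ⟶ X) (p : X ⟶ Y) :
    SSet.yonedaEquiv (X := Y) (n := n) (u ≫ p) = p.app _ (SSet.yonedaEquiv (X := X) (n := n) u) := rfl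

lemma yonedaEquiv_map_comp {X : SSet.{u}} {m n : SimplexCategory} (θ : m ⟶ n)
    (v : SSet.stdSimplex.obj n ⟶ X) :
    SSet.yonedaEquiv (X := X) (n := m) (SSet.stdSimplex.map θ ≫ v) =
      X.map θ.op (SSet.yonedaEquiv (X := X) (n := n) v) := by
  exact (CategoryTheory.uliftYonedaEquiv_naturality (X := Opposite.op n) v θ.op).symm

/-- A pointwise lifting criterion for the right lifting property against a map
of standard simplices. -/
lemma hlp_of_exists {E X : SSet.{u}} (p : E ⟶ X) {m n : SimplexCategory} (θ : m ⟶ n)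
    (H : ∀ (y : E.obj (Opposite.op m)) (x : X.obj (Opposite.op n)),
      p.app _ y = X.map θ.op x → ∃ yh : E.obj (Opposite.op n),
        E.map θ.op yh = y ∧ p.app _ yh = x) :
    HasLiftingProperty (SSet.stdSimplex.map θ) p := by
  constructor
  intro u v sq
  obtain ⟨yh, h1, h2⟩ := H (SSet.yonedaEquiv (X := E) (n := m) u) (SSet.yonedaEquiv (X := X) (n := n) v) (by
    rw [← yonedaEquiv_comp, sq.w, yonedaEquiv_map_comp])
  constructor
  refine ⟨⟨(SSet.yonedaEquiv (X := E) (n := n)).symm yh, ?_, ?_⟩⟩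
  · apply (SSet.yonedaEquiv (X := E) (n := m)).injective
    rw [yonedaEquiv_map_comp, Equiv.apply_symm_apply]
    exact h1
  · apply (SSet.yonedaEquiv (X := X) (n := n)).injective
    rw [yonedaEquiv_comp, Equiv.apply_symm_apply]
    exact h2

end Statement12Aux

/-- the nerve space map of a bundle scenario is a simplicial
scenario: surjective in every degree, with the right lifting property with
respect to all coface maps (local surjectivity) and all codegeneracy maps
(discreteness over vertices). -/
theorem statement_12 {V W : Type u} {Γ : SComplex V} {K : SComplex W}
    (f : Map Γ K) (hf : f.IsBundle) :
    (∀ Δ : SimplexCategoryᵒᵖ, Function.Surjective ((NMap f).app Δ)) ∧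
    (∀ (n : ℕ) (i : Fin (n + 2)),
      HasLiftingProperty (SSet.stdSimplex.map (SimplexCategory.δ i)) (NMap f)) ∧
    (∀ (n : ℕ) (j : Fin (n + 1)),
      HasLiftingProperty (SSet.stdSimplex.map (SimplexCategory.σ j)) (NMap f)) := by
  refine ⟨?_, ?_, ?_⟩
  · intro Δ x
    rcases x.2 with h0 | hfc
    · obtain ⟨y, hy, _⟩ := lift_spec f x ∅ (Or.inl rfl) (by rw [Set.image_empty, h0])
      exact ⟨y, hy⟩
    · obtain ⟨γ, hγ, hi⟩ := hf.1 _ hfc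
      obtain ⟨y, hy, _⟩ := lift_spec f x γ (Or.inr hγ) hi
      exact ⟨y, hy⟩
  · intro n i
    exact hlp_of_exists (NMap f) (SimplexCategory.δ i)
      (fun y x h => exists_lift f hf (SimplexCategory.δ i) y x h)
  · intro n j
    exact hlp_of_exists (NMap f) (SimplexCategory.σ j)
      (fun y x h => exists_lift f hf (SimplexCategory.σ j) y x h)

end Ctx
end
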